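/- arXiv:2502.15522 — 3 statements merged into one kernel-verified Lean document; each statement's English description precedes it below -/
import Mathlib

section
/- For all real numbers x in [0,1] and weights w_i ≥ 1 (i = 1,...,n), the inequality 1 - ∑_{i=1}^n w_i x_i ≤ ∏_{i=1}^n (1 - x_i)^{w_i} holds (Weierstrass product inequality). -/
/-- Weierstrass product inequality: for `x i ∈ [0,1]` and weights `w i ≥ 1`,
`1 - ∑ w i * x i ≤ ∏ (1 - x i) ^ (w i)` (real powers). -/
theorem weierstrass_product_inequality (n : ℕ) (x w : Fin n → ℝ)
    (hx : ∀ i, x i ∈ Set.Icc (0 : ℝ) 1) (hw : ∀ i, 1 ≤ w i) :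
    1 - ∑ i, w i * x i ≤ ∏ i, (1 - x i) ^ (w i) := by
  have key : ∀ s : Finset (Fin n),
      1 - ∑ i ∈ s, w i * x i ≤ ∏ i ∈ s, (1 - x i) ^ (w i) := by
    intro s
    induction s using Finset.induction with
    | empty => simp
    | @insert a s ha ih =>
      have hx0 := (hx a).1
      have hx1 := (hx a).2
      have hwa := hw a
      have hprod_nonneg : (0:ℝ) ≤ ∏ i ∈ s, (1 - x i) ^ (w i) :=
        Finset.prod_nonneg fun i _ => Real.rpow_nonneg (by linarith [(hx i).2]) _
      have hterm_nonneg : (0:ℝ) ≤ (1 - x a) ^ (w a) :=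
        Real.rpow_nonneg (by linarith) _
      have hwx_nonneg : 0 ≤ w a * x a :=
        mul_nonneg (by linarith) hx0
      rw [Finset.sum_insert ha, Finset.prod_insert ha]
      by_cases hS : 1 - ∑ i ∈ s, w i * x i ≤ 0
      · have : 1 - (w a * x a + ∑ i ∈ s, w i * x i) ≤ 0 := by linarith
        exact this.trans (mul_nonneg hterm_nonneg hprod_nonneg)
      · push_neg at hS
        have hbern : 1 - w a * x a ≤ (1 - x a) ^ (w a) := by
          have := one_add_mul_self_le_rpow_one_add (s := -x a) (by linarith) hwa
          have h1 : (1:ℝ) + -x a = 1 - x a := by ring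
          rw [h1] at this
          linarith
        by_cases hwx1 : 1 - w a * x a ≤ 0
        · have : 1 - (w a * x a + ∑ i ∈ s, w i * x i) ≤ 0 := by
            nlinarith [Finset.sum_nonneg (fun i (_ : i ∈ s) =>
              mul_nonneg (by linarith [hw i] : (0:ℝ) ≤ w i) (hx i).1)]
          exact this.trans (mul_nonneg hterm_nonneg hprod_nonneg)
        · push_neg at hwx1
          have hsum : 0 ≤ ∑ i ∈ s, w i * x i :=
            Finset.sum_nonneg fun i _ =>
              mul_nonneg (by linarith [hw i]) (hx i).1
          calc 1 - (w a * x a + ∑ i ∈ s, w i * x i)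
              ≤ (1 - w a * x a) * (1 - ∑ i ∈ s, w i * x i) := by nlinarith [mul_nonneg hwx_nonneg hsum]
            _ ≤ (1 - w a * x a) * ∏ i ∈ s, (1 - x i) ^ (w i) := by
                apply mul_le_mul_of_nonneg_left ih (by linarith)
            _ ≤ (1 - x a) ^ (w a) * ∏ i ∈ s, (1 - x i) ^ (w i) :=
                mul_le_mul_of_nonneg_right hbern hprod_nonneg
  exact key Finset.univ
end

section
/- Let A ∈ ℝ^{m×d} and R ∈ ℝ^{d×s} with orthonormal columns satisfy the restricted isometry property: (1-δ)‖x‖² ≤ ‖Ax‖² ≤ (1+δ)‖x‖² for all x in the range of R, where 0 < δ < 1. Then for any matrix M ∈ ℝ^{d×s} whose columns lie in range(R), every singular value satisfies √(1-δ) σ_j(M) ≤ σ_j(AM) ≤ √(1+δ) σ_j(M) for j = 1,...,s. -/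
open Matrix

/-- Euclidean norm of a finite real vector. -/
noncomputable def evnorm {k : ℕ} (v : Fin k → ℝ) : ℝ :=
  Real.sqrt (∑ i, (v i) ^ 2)

/-- The `j`-th largest singular value of a real matrix, via the Courant–Fischer
min-max characterization: the supremum over `j`-dimensional subspaces `S` of the
infimum of `‖Bv‖` over unit vectors `v ∈ S`. -/
noncomputable def singVal {a b : ℕ} (B : Matrix (Fin a) (Fin b) ℝ) (j : ℕ) : ℝ :=
  sSup {r | ∃ S : Submodule ℝ (Fin b → ℝ), Module.finrank ℝ S = j ∧
    r = sInf {t | ∃ v ∈ S, evnorm v = 1 ∧ t = evnorm (B.mulVec v)}}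

lemma evnorm_nonneg {k : ℕ} (v : Fin k → ℝ) : 0 ≤ evnorm v := Real.sqrt_nonneg _

lemma evnorm_sq {k : ℕ} (v : Fin k → ℝ) : evnorm v ^ 2 = ∑ i, (v i) ^ 2 :=
  Real.sq_sqrt (Finset.sum_nonneg fun i _ => sq_nonneg _)

lemma evnorm_pos {k : ℕ} {v : Fin k → ℝ} (hv : v ≠ 0) : 0 < evnorm v := by
  obtain ⟨i, hi⟩ : ∃ i, v i ≠ 0 := by
    by_contra h
    push_neg at h
    exact hv (funext h)
  apply Real.sqrt_pos.2
  have h1 : (0:ℝ) < (v i) ^ 2 := by positivity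
  have h2 : (v i) ^ 2 ≤ ∑ j, (v j) ^ 2 :=
    Finset.single_le_sum (f := fun j => (v j) ^ 2) (fun j _ => sq_nonneg _) (Finset.mem_univ i)
  linarith

lemma evnorm_smul {k : ℕ} (c : ℝ) (v : Fin k → ℝ) : evnorm (c • v) = |c| * evnorm v := by
  unfold evnorm
  have : ∑ i, ((c • v) i) ^ 2 = c ^ 2 * ∑ i, (v i) ^ 2 := by
    rw [Finset.mul_sum]
    refine Finset.sum_congr rfl fun i _ => by simp [mul_pow]
  rw [this, Real.sqrt_mul (sq_nonneg c), Real.sqrt_sq_eq_abs]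

/-- any subspace of positive finrank contains a unit vector -/
lemma exists_unit_vector {k : ℕ} (S : Submodule ℝ (Fin k → ℝ)) (hS : 0 < Module.finrank ℝ S) :
    ∃ v ∈ S, evnorm v = 1 := by
  have : Nontrivial S := Module.finrank_pos_iff.mp hS
  obtain ⟨x, hx⟩ := exists_ne (0 : S)
  have hx0 : (x : Fin k → ℝ) ≠ 0 := by
    intro h
    exact hx (Subtype.ext h)
  have hpos := evnorm_pos hx0
  refine ⟨(evnorm (x : Fin k → ℝ))⁻¹ • (x : Fin k → ℝ), S.smul_mem _ x.2, ?_⟩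
  rw [evnorm_smul, abs_of_nonneg (by positivity), inv_mul_cancel₀ (ne_of_gt hpos)]

/-- Cauchy–Schwarz bound for rows: matrices take unit vectors to vectors of
bounded norm. -/
lemma evnorm_mulVec_le {a b : ℕ} (B : Matrix (Fin a) (Fin b) ℝ) {v : Fin b → ℝ}
    (hv : evnorm v = 1) :
    evnorm (B.mulVec v) ≤ Real.sqrt (∑ i, ∑ j, (B i j) ^ 2) := by
  have hv2 : ∑ j, (v j) ^ 2 = 1 := by
    have := evnorm_sq v
    rw [hv] at this
    simpa using this.symm
  apply Real.sqrt_le_sqrt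
  apply Finset.sum_le_sum
  intro i _
  calc (B.mulVec v i) ^ 2 = (∑ j, B i j * v j) ^ 2 := by rfl
    _ ≤ (∑ j, (B i j) ^ 2) * ∑ j, (v j) ^ 2 :=
        Finset.sum_mul_sq_le_sq_mul_sq _ _ _
    _ = ∑ j, (B i j) ^ 2 := by rw [hv2, mul_one]

/-- If `A` satisfies the RIP on the range of `R` (a matrix with orthonormal columns)
with constant `0 < δ < 1`, then for any matrix `M` whose columns lie in `range(R)`,
`√(1-δ) σ_j(M) ≤ σ_j(AM) ≤ √(1+δ) σ_j(M)` for `j = 1, …, s`. -/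
theorem rip_singular_value_bounds (m d s : ℕ)
    (A : Matrix (Fin m) (Fin d) ℝ) (R : Matrix (Fin d) (Fin s) ℝ)
    (hR : Rᵀ * R = 1) (δ : ℝ) (hδ0 : 0 < δ) (hδ1 : δ < 1)
    (hRIP : ∀ x : Fin d → ℝ, (∃ z : Fin s → ℝ, x = R.mulVec z) →
      (1 - δ) * (evnorm x) ^ 2 ≤ (evnorm (A.mulVec x)) ^ 2 ∧
      (evnorm (A.mulVec x)) ^ 2 ≤ (1 + δ) * (evnorm x) ^ 2)
    (M : Matrix (Fin d) (Fin s) ℝ)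
    (hM : ∀ c : Fin s, ∃ z : Fin s → ℝ, (fun i => M i c) = R.mulVec z) :
    ∀ j : ℕ, 1 ≤ j → j ≤ s →
      Real.sqrt (1 - δ) * singVal M j ≤ singVal (A * M) j ∧
      singVal (A * M) j ≤ Real.sqrt (1 + δ) * singVal M j := by
  intro j hj1 hjs
  set c₁ := Real.sqrt (1 - δ) with hc₁
  set c₂ := Real.sqrt (1 + δ) with hc₂
  have hc₁pos : 0 < c₁ := Real.sqrt_pos.2 (by linarith)
  have hc₂pos : 0 < c₂ := Real.sqrt_pos.2 (by linarith)
  -- every Mv is in the range of R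
  have hrange : ∀ v : Fin s → ℝ, ∃ z : Fin s → ℝ, M.mulVec v = R.mulVec z := by
    intro v
    classical
    refine ⟨fun kk => ∑ c, v c * (hM c).choose kk, ?_⟩
    funext i
    have hz : ∀ c, M i c = ∑ kk, R i kk * (hM c).choose kk := by
      intro c
      have := congrFun (hM c).choose_spec i
      simpa [Matrix.mulVec, dotProduct] using this
    simp only [Matrix.mulVec, dotProduct]
    calc ∑ c, M i c * v c = ∑ c, (∑ kk, R i kk * (hM c).choose kk) * v c := by
          refine Finset.sum_congr rfl fun c _ => by rw [hz c]
      _ = ∑ c, ∑ kk, R i kk * (v c * (hM c).choose kk) := by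
          refine Finset.sum_congr rfl fun c _ => ?_
          rw [Finset.sum_mul]
          exact Finset.sum_congr rfl fun kk _ => by ring
      _ = ∑ kk, ∑ c, R i kk * (v c * (hM c).choose kk) := Finset.sum_comm
      _ = ∑ kk, R i kk * ∑ c, v c * (hM c).choose kk := by
          refine Finset.sum_congr rfl fun kk _ => by rw [Finset.mul_sum]
  -- pointwise norm bounds
  have hpoint : ∀ v : Fin s → ℝ,
      c₁ * evnorm (M.mulVec v) ≤ evnorm ((A * M).mulVec v) ∧
      evnorm ((A * M).mulVec v) ≤ c₂ * evnorm (M.mulVec v) := by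
    intro v
    have hAM : (A * M).mulVec v = A.mulVec (M.mulVec v) := (Matrix.mulVec_mulVec v A M).symm
    have h := hRIP (M.mulVec v) (hrange v)
    rw [hAM]
    have e1 : c₁ * evnorm (M.mulVec v) = Real.sqrt ((1 - δ) * evnorm (M.mulVec v) ^ 2) := by
      rw [Real.sqrt_mul (by linarith), Real.sqrt_sq (evnorm_nonneg _)]
    have e2 : c₂ * evnorm (M.mulVec v) = Real.sqrt ((1 + δ) * evnorm (M.mulVec v) ^ 2) := by
      rw [Real.sqrt_mul (by linarith), Real.sqrt_sq (evnorm_nonneg _)]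
    have e3 : evnorm (A.mulVec (M.mulVec v)) =
        Real.sqrt (evnorm (A.mulVec (M.mulVec v)) ^ 2) :=
      (Real.sqrt_sq (evnorm_nonneg _)).symm
    constructor
    · rw [e1, e3]; exact Real.sqrt_le_sqrt h.1
    · rw [e3, e2]; exact Real.sqrt_le_sqrt h.2
  -- notation for the inner sets
  set TM : Submodule ℝ (Fin s → ℝ) → Set ℝ :=
    fun S => {t | ∃ v ∈ S, evnorm v = 1 ∧ t = evnorm (M.mulVec v)} with hTM
  set TAM : Submodule ℝ (Fin s → ℝ) → Set ℝ :=
    fun S => {t | ∃ v ∈ S, evnorm v = 1 ∧ t = evnorm ((A * M).mulVec v)} with hTAM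
  have hbddM : ∀ S, BddBelow (TM S) := by
    intro S
    exact ⟨0, fun t ⟨v, _, _, ht⟩ => ht ▸ evnorm_nonneg _⟩
  have hbddAM : ∀ S, BddBelow (TAM S) := by
    intro S
    exact ⟨0, fun t ⟨v, _, _, ht⟩ => ht ▸ evnorm_nonneg _⟩
  have hne : ∀ S : Submodule ℝ (Fin s → ℝ), Module.finrank ℝ S = j →
      (TM S).Nonempty ∧ (TAM S).Nonempty := by
    intro S hS
    obtain ⟨v, hvS, hv1⟩ := exists_unit_vector S (by omega)
    exact ⟨⟨_, v, hvS, hv1, rfl⟩, ⟨_, v, hvS, hv1, rfl⟩⟩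
  -- infimum comparisons
  have hinf : ∀ S : Submodule ℝ (Fin s → ℝ), Module.finrank ℝ S = j →
      c₁ * sInf (TM S) ≤ sInf (TAM S) ∧ sInf (TAM S) ≤ c₂ * sInf (TM S) := by
    intro S hS
    obtain ⟨hMne, hAMne⟩ := hne S hS
    constructor
    · apply le_csInf hAMne
      rintro t ⟨v, hvS, hv1, rfl⟩
      calc c₁ * sInf (TM S) ≤ c₁ * evnorm (M.mulVec v) := by
            apply mul_le_mul_of_nonneg_left _ hc₁pos.le
            exact csInf_le (hbddM S) ⟨v, hvS, hv1, rfl⟩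
        _ ≤ evnorm ((A * M).mulVec v) := (hpoint v).1
    · have hdiv : sInf (TAM S) / c₂ ≤ sInf (TM S) := by
        apply le_csInf hMne
        rintro t ⟨v, hvS, hv1, rfl⟩
        rw [div_le_iff₀ hc₂pos]
        calc sInf (TAM S) ≤ evnorm ((A * M).mulVec v) :=
              csInf_le (hbddAM S) ⟨v, hvS, hv1, rfl⟩
          _ ≤ c₂ * evnorm (M.mulVec v) := (hpoint v).2
          _ = evnorm (M.mulVec v) * c₂ := mul_comm _ _
      calc sInf (TAM S) = c₂ * (sInf (TAM S) / c₂) := by field_simp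
        _ ≤ c₂ * sInf (TM S) := mul_le_mul_of_nonneg_left hdiv hc₂pos.le
  -- the outer sets
  set X : Set ℝ := {r | ∃ S : Submodule ℝ (Fin s → ℝ), Module.finrank ℝ S = j ∧
    r = sInf (TAM S)} with hX
  set Y : Set ℝ := {r | ∃ S : Submodule ℝ (Fin s → ℝ), Module.finrank ℝ S = j ∧
    r = sInf (TM S)} with hY
  have hsingAM : singVal (A * M) j = sSup X := rfl
  have hsingM : singVal M j = sSup Y := rfl
  -- there is a subspace of finrank j
  have hexS : ∃ S : Submodule ℝ (Fin s → ℝ), Module.finrank ℝ S = j := by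
    have hfr : j ≤ Module.finrank ℝ (Fin s → ℝ) := by
      rw [Module.finrank_fin_fun]; exact hjs
    obtain ⟨f, hf⟩ := exists_linearIndependent_of_le_finrank hfr
    refine ⟨Submodule.span ℝ (Set.range f), ?_⟩
    rw [finrank_span_eq_card hf, Fintype.card_fin]
  have hXne : X.Nonempty := by
    obtain ⟨S, hS⟩ := hexS
    exact ⟨_, S, hS, rfl⟩
  have hYne : Y.Nonempty := by
    obtain ⟨S, hS⟩ := hexS
    exact ⟨_, S, hS, rfl⟩
  have hXbdd : BddAbove X := by
    refine ⟨Real.sqrt (∑ i, ∑ c, ((A * M) i c) ^ 2), ?_⟩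
    rintro r ⟨S, hS, rfl⟩
    obtain ⟨-, hAMne⟩ := hne S hS
    obtain ⟨t, v, hvS, hv1, rfl⟩ := hAMne
    exact le_trans (csInf_le (hbddAM S) ⟨v, hvS, hv1, rfl⟩) (evnorm_mulVec_le _ hv1)
  have hYbdd : BddAbove Y := by
    refine ⟨Real.sqrt (∑ i, ∑ c, (M i c) ^ 2), ?_⟩
    rintro r ⟨S, hS, rfl⟩
    obtain ⟨hMne, -⟩ := hne S hS
    obtain ⟨t, v, hvS, hv1, rfl⟩ := hMne
    exact le_trans (csInf_le (hbddM S) ⟨v, hvS, hv1, rfl⟩) (evnorm_mulVec_le _ hv1)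
  rw [hsingAM, hsingM]
  constructor
  · -- c₁ * sSup Y ≤ sSup X
    have hsup : sSup Y ≤ sSup X / c₁ := by
      apply csSup_le hYne
      rintro y ⟨S, hS, rfl⟩
      rw [le_div_iff₀ hc₁pos]
      calc sInf (TM S) * c₁ = c₁ * sInf (TM S) := mul_comm _ _
        _ ≤ sInf (TAM S) := (hinf S hS).1
        _ ≤ sSup X := le_csSup hXbdd ⟨S, hS, rfl⟩
    calc c₁ * sSup Y ≤ c₁ * (sSup X / c₁) := mul_le_mul_of_nonneg_left hsup hc₁pos.le
      _ = sSup X := by field_simp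
  · apply csSup_le hXne
    rintro x ⟨S, hS, rfl⟩
    calc sInf (TAM S) ≤ c₂ * sInf (TM S) := (hinf S hS).2
      _ ≤ c₂ * sSup Y := mul_le_mul_of_nonneg_left (le_csSup hYbdd ⟨S, hS, rfl⟩) hc₂pos.le
end

section
/- Let f(W₁,...,W_L) = ‖W_L ⋯ W₁ Y − X‖_F² + λ ∑_{ℓ=1}^L ‖W_ℓ‖_F² with λ > 0, and let P be the orthogonal projection onto range(Y). If (W₁,...,W_L) is a global minimizer of f, then W₁ (I − P) = 0, i.e., the first-layer weights vanish on the orthogonal complement of the range of Y. -/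
open Matrix

/-- `Yd` is the Moore–Penrose pseudoinverse of `Y` (the four Penrose conditions). -/
def IsMoorePenrose {a b : ℕ} (Y : Matrix (Fin a) (Fin b) ℝ)
    (Yd : Matrix (Fin b) (Fin a) ℝ) : Prop :=
  Y * Yd * Y = Y ∧ Yd * Y * Yd = Yd ∧ (Y * Yd)ᵀ = Y * Yd ∧ (Yd * Y)ᵀ = Yd * Y

/-- Squared Frobenius norm. -/
noncomputable def frobSq {a b : ℕ} (A : Matrix (Fin a) (Fin b) ℝ) : ℝ :=
  ∑ i, ∑ j, (A i j) ^ 2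

/-- Product of the first `ℓ` layers of a linear network:
`netProd dims W ℓ = W_{ℓ} ⋯ W_1` (0-indexed layers). -/
def netProd (dims : ℕ → ℕ)
    (W : ∀ ℓ : ℕ, Matrix (Fin (dims (ℓ + 1))) (Fin (dims ℓ)) ℝ) :
    (ℓ : ℕ) → Matrix (Fin (dims ℓ)) (Fin (dims 0)) ℝ
  | 0 => 1
  | ℓ + 1 => W ℓ * netProd dims W ℓ

/-- A global minimizer of the `ℓ₂`-regularized loss
`‖W_L ⋯ W_1 Y − X‖_F² + λ ∑ ‖W_ℓ‖_F²` (with `λ > 0`) has first-layer weights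
vanishing on the orthogonal complement of `range(Y)`: `W₁ (I − YY†) = 0`. -/
theorem global_min_vanishes_off_rangeY (L : ℕ) (hL : 1 ≤ L) (dims : ℕ → ℕ) (n : ℕ)
    (Y : Matrix (Fin (dims 0)) (Fin n) ℝ) (X : Matrix (Fin (dims L)) (Fin n) ℝ)
    (lam : ℝ) (hlam : 0 < lam)
    (Yd : Matrix (Fin n) (Fin (dims 0)) ℝ) (hYd : IsMoorePenrose Y Yd)
    (W : ∀ ℓ : ℕ, Matrix (Fin (dims (ℓ + 1))) (Fin (dims ℓ)) ℝ)
    (hmin : ∀ W' : ∀ ℓ : ℕ, Matrix (Fin (dims (ℓ + 1))) (Fin (dims ℓ)) ℝ,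
      frobSq (netProd dims W L * Y - X) + lam * ∑ ℓ ∈ Finset.range L, frobSq (W ℓ) ≤
      frobSq (netProd dims W' L * Y - X) + lam * ∑ ℓ ∈ Finset.range L, frobSq (W' ℓ)) :
    W 0 * (1 - Y * Yd) = 0 := by
  obtain ⟨h1, h2, h3, h4⟩ := hYd
  set P : Matrix (Fin (dims 0)) (Fin (dims 0)) ℝ := Y * Yd with hP
  have hPP : P * P = P := by
    rw [hP, Matrix.mul_assoc, ← Matrix.mul_assoc Yd Y Yd, h2]
  have hPY : P * Y = Y := by rw [hP]; exact h1
  -- the competitor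
  set W' : ∀ ℓ : ℕ, Matrix (Fin (dims (ℓ + 1))) (Fin (dims ℓ)) ℝ :=
    fun ℓ => match ℓ with
      | 0 => W 0 * P
      | Nat.succ m => W (m + 1) with hW'
  have hW'0 : W' 0 = W 0 * P := rfl
  have hW'succ : ∀ m : ℕ, W' (m + 1) = W (m + 1) := fun m => rfl
  -- products agree after multiplying by Y
  have hprod : ∀ ℓ : ℕ, netProd dims W' ℓ * Y = netProd dims W ℓ * Y := by
    intro ℓ
    induction ℓ with
    | zero => rfl
    | succ m ih =>
      cases m with
      | zero =>
        show W' 0 * netProd dims W' 0 * Y = W 0 * netProd dims W 0 * Y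
        simp only [netProd, Matrix.mul_one, hW'0, Matrix.mul_assoc, hPY]
      | succ k =>
        show W' (k + 1) * netProd dims W' (k + 1) * Y
            = W (k + 1) * netProd dims W (k + 1) * Y
        rw [hW'succ, Matrix.mul_assoc, Matrix.mul_assoc, ih]
  -- Pythagoras for the first layer
  set Z : Matrix (Fin (dims 1)) (Fin (dims 0)) ℝ := W 0 * (1 - P) with hZ
  have hsplit : W 0 = W 0 * P + Z := by
    rw [hZ, Matrix.mul_sub, Matrix.mul_one]; abel
  have hcross : ∑ i, ∑ j, (W 0 * P) i j * Z i j = 0 := by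
    have ht : ∑ i, ∑ j, (W 0 * P) i j * Z i j
        = Matrix.trace ((W 0 * P) * Zᵀ) := by
      simp [Matrix.trace, Matrix.mul_apply, Matrix.diag, Matrix.transpose_apply]
    rw [ht]
    have h1P : (1 - P)ᵀ = 1 - P := by
      rw [Matrix.transpose_sub, Matrix.transpose_one, hP, h3]
    rw [hZ, Matrix.transpose_mul, h1P, ← Matrix.mul_assoc,
      Matrix.mul_assoc (W 0) P (1 - P)]
    have hz0 : P * (1 - P) = 0 := by rw [Matrix.mul_sub, Matrix.mul_one, hPP, sub_self]
    rw [hz0, Matrix.mul_zero, Matrix.zero_mul, Matrix.trace_zero]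
  have hpyth : frobSq (W 0) = frobSq (W 0 * P) + frobSq Z := by
    calc frobSq (W 0) = frobSq (W 0 * P + Z) := by rw [← hsplit]
    _ = frobSq (W 0 * P) + frobSq Z
        + 2 * ∑ i, ∑ j, (W 0 * P) i j * Z i j := by
        simp only [frobSq, Matrix.add_apply, ← Finset.sum_add_distrib, Finset.mul_sum]
        congr 1; ext i; congr 1; ext j; ring
    _ = frobSq (W 0 * P) + frobSq Z := by rw [hcross]; ring
  -- sums of regularizers differ only at index 0
  have hsum : ∑ ℓ ∈ Finset.range L, frobSq (W ℓ) - ∑ ℓ ∈ Finset.range L, frobSq (W' ℓ)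
      = frobSq (W 0) - frobSq (W' 0) := by
    rw [← Finset.sum_sub_distrib]
    rw [Finset.sum_eq_single 0]
    · intro b _ hb
      obtain ⟨m, rfl⟩ := Nat.exists_eq_succ_of_ne_zero hb
      rw [hW'succ, sub_self]
    · intro h; exact absurd (Finset.mem_range.mpr hL) h
  -- apply minimality
  have hm := hmin W'
  rw [hprod L] at hm
  have hle : ∑ ℓ ∈ Finset.range L, frobSq (W ℓ) ≤ ∑ ℓ ∈ Finset.range L, frobSq (W' ℓ) := by
    nlinarith
  have hkey : frobSq Z ≤ 0 := by
    have hd := sub_nonpos.mpr hle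
    rw [hsum, hW'0, hpyth] at hd
    linarith
  have hnn : 0 ≤ frobSq Z :=
    Finset.sum_nonneg fun i _ => Finset.sum_nonneg fun j _ => sq_nonneg _
  have hz : frobSq Z = 0 := le_antisymm hkey hnn
  show Z = 0
  ext i j
  have hi : ∑ j, (Z i j) ^ 2 = 0 := by
    have := (Finset.sum_eq_zero_iff_of_nonneg
      (fun i (_ : i ∈ Finset.univ) => Finset.sum_nonneg fun j _ => sq_nonneg (Z i j))).mp hz
    exact this i (Finset.mem_univ i)
  have hij : (Z i j) ^ 2 = 0 := by
    have := (Finset.sum_eq_zero_iff_of_nonneg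
      (fun j (_ : j ∈ Finset.univ) => sq_nonneg (Z i j))).mp hi
    exact this j (Finset.mem_univ j)
  simpa using pow_eq_zero_iff (n := 2) (by norm_num) |>.mp hij
end
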